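/- Mean value theorem for polynomials: for a < b and any polynomial P over a real closed field, there exists c in the open interval (a,b) such that P(b) − P(a) = P'(c) · (b − a). -/

import Mathlib

open Polynomial

/-- A discrete real closed field: an ordered field in which the intermediate
value property holds for polynomials. -/
class RealClosedFieldIVT (R : Type*) [Field R] [LinearOrder R] [IsStrictOrderedRing R] : Prop where
  ivt : ∀ (p : Polynomial R) (a b : R), a ≤ b → p.eval a ≤ 0 → 0 ≤ p.eval b →
    ∃ x ∈ Set.Icc a b, p.eval x = 0

/-- If a polynomial has no root on [a,b], its values at a and b have the same sign. -/
lemma poly_sign_const {R : Type*} [Field R] [LinearOrder R] [IsStrictOrderedRing R] [RealClosedFieldIVT R]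
    (p : Polynomial R) (a b : R) (hab : a ≤ b)
    (h : ∀ x ∈ Set.Icc a b, p.eval x ≠ 0) : 0 < p.eval a * p.eval b := by
  have ha := h a ⟨le_refl a, hab⟩
  have hb := h b ⟨hab, le_refl b⟩
  rcases ha.lt_or_gt with ha' | ha' <;> rcases hb.lt_or_gt with hb' | hb'
  · exact mul_pos_of_neg_of_neg ha' hb'
  · obtain ⟨x, hx, hx0⟩ := RealClosedFieldIVT.ivt p a b hab ha'.le hb'.le
    exact absurd hx0 (h x hx)
  · obtain ⟨x, hx, hx0⟩ := RealClosedFieldIVT.ivt (-p) a b hab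
      (by simpa using ha'.le) (by simpa using hb'.le)
    exact absurd (by simpa using hx0) (h x hx)
  · exact mul_pos ha' hb'

lemma deriv_fac {R : Type*} [CommRing R] (a r : R) (h : Polynomial R) (m n : ℕ) :
    derivative ((X - C a)^(m+1) * ((X - C r)^(n+1) * h)) =
    (X - C a)^m * ((X - C r)^n *
      (((m : Polynomial R)+1) * (X - C r) * h + ((n : Polynomial R)+1) * (X - C a) * h
        + (X - C a) * ((X - C r) * derivative h))) := by
  simp only [derivative_mul, derivative_pow, derivative_sub, derivative_X, derivative_C,
    Nat.add_sub_cancel, Nat.cast_add, Nat.cast_one, sub_zero, mul_one,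
    Polynomial.C_add, Polynomial.C_1, Polynomial.C_eq_natCast]
  ring

lemma poly_rolle {R : Type*} [Field R] [LinearOrder R] [IsStrictOrderedRing R] [RealClosedFieldIVT R]
    (Q : Polynomial R) (a b : R) (hab : a < b)
    (hQa : Q.eval a = 0) (hQb : Q.eval b = 0) :
    ∃ c ∈ Set.Ioo a b, (derivative Q).eval c = 0 := by
  by_cases hQ : Q = 0
  · exact ⟨(a+b)/2, ⟨by linarith, by linarith⟩, by simp [hQ]⟩
  -- choose the smallest root r of Q in (a, b]
  classical
  set s : Finset R := Q.roots.toFinset.filter (fun x => a < x ∧ x ≤ b) with hs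
  have hbs : b ∈ s := by
    simp [hs, Multiset.mem_toFinset, mem_roots, hQ, IsRoot, hQb, hab, le_refl]
  have hsne : s.Nonempty := ⟨b, hbs⟩
  set r : R := s.min' hsne with hrdef
  have hrmem : r ∈ s := s.min'_mem hsne
  have har : a < r := by
    have := (Finset.mem_filter.mp hrmem).2
    exact this.1
  have hrb : r ≤ b := (Finset.mem_filter.mp hrmem).2.2
  have hQr : Q.eval r = 0 := by
    have := (Finset.mem_filter.mp hrmem).1
    rw [Multiset.mem_toFinset, mem_roots hQ] at this
    exact this
  have hnoroot : ∀ x, a < x → x < r → Q.eval x ≠ 0 := by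
    intro x hax hxr hx0
    have hxs : x ∈ s := by
      simp only [hs, Finset.mem_filter, Multiset.mem_toFinset, mem_roots hQ]
      exact ⟨hx0, hax, le_of_lt (lt_of_lt_of_le hxr hrb)⟩
    exact absurd (s.min'_le x hxs) (not_le.mpr hxr)
  -- factor out the root a
  set m : ℕ := Q.rootMultiplicity a with hmdef
  set Q1 : Polynomial R := Q /ₘ (X - C a)^m with hQ1def
  have hfac1 : (X - C a)^m * Q1 = Q := Q.pow_mul_divByMonic_rootMultiplicity_eq a
  have hQ1a : Q1.eval a ≠ 0 := Q.eval_divByMonic_pow_rootMultiplicity_ne_zero a hQ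
  have hQ1ne : Q1 ≠ 0 := fun h0 => hQ1a (by rw [h0]; simp)
  have hm : 0 < m := (Q.rootMultiplicity_pos hQ).mpr hQa
  have hQ1r : Q1.eval r = 0 := by
    have : Q.eval r = (r - a)^m * Q1.eval r := by
      rw [← hfac1]; simp
    have hra : (r - a)^m ≠ 0 := pow_ne_zero _ (sub_ne_zero.mpr (ne_of_gt har))
    rw [hQr] at this
    exact (mul_eq_zero.mp this.symm).resolve_left hra
  -- factor out the root r from Q1
  set n : ℕ := Q1.rootMultiplicity r with hndef
  set h : Polynomial R := Q1 /ₘ (X - C r)^n with hhdef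
  have hfac2 : (X - C r)^n * h = Q1 := Q1.pow_mul_divByMonic_rootMultiplicity_eq r
  have hhr : h.eval r ≠ 0 := Q1.eval_divByMonic_pow_rootMultiplicity_ne_zero r hQ1ne
  have hn : 0 < n := (Q1.rootMultiplicity_pos hQ1ne).mpr hQ1r
  have hha : h.eval a ≠ 0 := by
    intro h0
    apply hQ1a
    rw [← hfac2]; simp [h0]
  have hQfac : ∀ x : R, Q.eval x = (x - a)^m * ((x - r)^n * h.eval x) := by
    intro x
    rw [← hfac1, ← hfac2]; simp [mul_assoc]
  have hhno : ∀ x ∈ Set.Icc a r, h.eval x ≠ 0 := by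
    rintro x ⟨hax, hxr⟩ hx0
    rcases eq_or_lt_of_le hax with rfl | hax'
    · exact hha hx0
    rcases eq_or_lt_of_le hxr with rfl | hxr'
    · exact hhr hx0
    exact hnoroot x hax' hxr' (by rw [hQfac x, hx0]; ring)
  have hsign : 0 < h.eval a * h.eval r := poly_sign_const h a r (le_of_lt har) hhno
  -- set up g
  obtain ⟨m', hm'⟩ : ∃ m', m = m' + 1 := ⟨m - 1, (Nat.succ_pred_eq_of_pos hm).symm⟩
  obtain ⟨n', hn'⟩ : ∃ n', n = n' + 1 := ⟨n - 1, (Nat.succ_pred_eq_of_pos hn).symm⟩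
  set g : Polynomial R :=
      ((m' : Polynomial R)+1) * (X - C r) * h + ((n' : Polynomial R)+1) * (X - C a) * h
        + (X - C a) * ((X - C r) * derivative h) with hgdef
  have hQeq : Q = (X - C a)^(m'+1) * ((X - C r)^(n'+1) * h) := by
    rw [← hfac1, ← hfac2, hm', hn']
  have hder : derivative Q = (X - C a)^m' * ((X - C r)^n' * g) := by
    rw [hQeq, deriv_fac]
  have hga : g.eval a = ((m' : R)+1) * (a - r) * h.eval a := by
    simp [hgdef]
  have hgr : g.eval r = ((n' : R)+1) * (r - a) * h.eval r := by
    simp [hgdef]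
  have hm1 : (0:R) < (m' : R) + 1 := by positivity
  have hn1 : (0:R) < (n' : R) + 1 := by positivity
  have hra : (0:R) < r - a := sub_pos.mpr har
  have hprod : g.eval a * g.eval r < 0 := by
    rw [hga, hgr]
    have : ((m' : R)+1) * (a - r) * h.eval a * (((n' : R)+1) * (r - a) * h.eval r)
        = -(((m' : R)+1) * ((n' : R)+1) * (r - a)^2 * (h.eval a * h.eval r)) := by ring
    rw [this]
    have : 0 < ((m' : R)+1) * ((n' : R)+1) * (r - a)^2 * (h.eval a * h.eval r) := by
      apply mul_pos _ hsign
      positivity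
    linarith
  have hgane : g.eval a ≠ 0 := fun h0 => by simp [h0] at hprod
  have hgrne : g.eval r ≠ 0 := fun h0 => by simp [h0] at hprod
  -- find root of g in (a, r)
  have : ∃ c ∈ Set.Icc a r, g.eval c = 0 := by
    rcases mul_neg_iff.mp hprod with ⟨h1, h2⟩ | ⟨h1, h2⟩
    · obtain ⟨x, hx, hx0⟩ := RealClosedFieldIVT.ivt (-g) a r (le_of_lt har)
        (by simpa using h1.le) (by simpa using h2.le)
      exact ⟨x, hx, by simpa using hx0⟩
    · exact RealClosedFieldIVT.ivt g a r (le_of_lt har) h1.le h2.le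
  obtain ⟨c, ⟨hac, hcr⟩, hc0⟩ := this
  have hac' : a < c := lt_of_le_of_ne hac (fun h0 => hgane (h0 ▸ hc0))
  have hcr' : c < r := lt_of_le_of_ne hcr (fun h0 => hgrne (h0 ▸ hc0))
  refine ⟨c, ⟨hac', lt_of_lt_of_le hcr' hrb⟩, ?_⟩
  rw [hder]
  simp [hc0]

/-- Mean value theorem for polynomials over a real closed field. -/
theorem poly_mvt {R : Type*} [Field R] [LinearOrder R] [IsStrictOrderedRing R] [RealClosedFieldIVT R]
    (P : Polynomial R) (a b : R) (hab : a < b) :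
    ∃ c ∈ Set.Ioo a b,
      P.eval b - P.eval a = (Polynomial.derivative P).eval c * (b - a) := by
  have hba : b - a ≠ 0 := sub_ne_zero.mpr (ne_of_gt hab)
  set slope : R := (P.eval b - P.eval a) / (b - a) with hslope
  set Q : Polynomial R := P - (C slope * (X - C a) + C (P.eval a)) with hQdef
  have hQa : Q.eval a = 0 := by simp [hQdef]
  have hQb : Q.eval b = 0 := by
    simp only [hQdef, eval_sub, eval_add, eval_mul, eval_C, eval_X]
    rw [hslope, div_mul_cancel₀ _ hba]; ring
  obtain ⟨c, hc, hc0⟩ := poly_rolle Q a b hab hQa hQb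
  refine ⟨c, hc, ?_⟩
  have : (derivative Q).eval c = (derivative P).eval c - slope := by
    simp [hQdef]
  rw [this] at hc0
  have : (derivative P).eval c = slope := by linarith
  rw [this, hslope]
  field_simp
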